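/- Let b : ℕ → ℕ satisfy b(m) < m for all large m and b(m)/m → 0 as m → ∞. For each m, set M = m − b(m) + 1 and z = ⌈4M⌉, and let Y₁, …, Y_z be independent random variables each uniformly distributed on {b(m), …, m}. Then there exist constants c₁, c₂, c₃ > 0 and m₀ such that for all m ≥ m₀, P(c₁ m² ≤ ∑_{i=1}^z Y_i ≤ c₂ m²) ≥ 1 − 2 exp(−c₃ m). -/

import Mathlib

open MeasureTheory ProbabilityTheory

private lemma aux_exp_half : Real.exp (-(1/2 : ℝ)) ≤ 5/8 := by
  have h1 : ((8:ℝ)/5) ^ 2 ≤ Real.exp (1/2) ^ 2 := by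
    rw [← Real.exp_nat_mul]
    norm_num
    calc (64:ℝ)/25 ≤ 2.7182818283 := by norm_num
    _ ≤ Real.exp 1 := le_of_lt Real.exp_one_gt_d9
  have h2 : (8:ℝ)/5 ≤ Real.exp (1/2) := by
    nlinarith [Real.exp_pos (1/2:ℝ)]
  rw [Real.exp_neg]
  rw [inv_le_comm₀ (Real.exp_pos _) (by norm_num)]
  linarith

private lemma aux_ratio : (17:ℝ)/20 ≤ Real.exp (-(1/15 : ℝ)) := by
  have h : (1:ℝ) - 1/15 ≤ Real.exp (-(1/15)) := by
    have := Real.add_one_le_exp (-(1/15:ℝ)); linarith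
  linarith

set_option maxHeartbeats 1000000 in
/-- Let `b : ℕ → ℕ` satisfy `b m < m` for all large `m` and `b m / m → 0`.  With
`M = m − b m + 1` and `z = 4M`, for independent `Y₁, …, Y_z` uniform on `{b m, …, m}`,
there are constants `c₁, c₂, c₃ > 0` and `m₀` such that for all `m ≥ m₀`,
`P(c₁ m² ≤ ∑ Yᵢ ≤ c₂ m²) ≥ 1 − 2 exp(−c₃ m)`. -/
theorem stmt5 (b : ℕ → ℕ) (hb : ∀ᶠ m in Filter.atTop, b m < m)
    (hb0 : Filter.Tendsto (fun m : ℕ => (b m : ℝ) / m) Filter.atTop (nhds 0)) :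
    ∃ c₁ c₂ c₃ : ℝ, 0 < c₁ ∧ 0 < c₂ ∧ 0 < c₃ ∧ ∃ m₀ : ℕ, ∀ m ≥ m₀,
      ∀ (Ω : Type) (_ : MeasurableSpace Ω) (Pr : Measure Ω), IsProbabilityMeasure Pr →
        ∀ Y : Fin (4 * (m - b m + 1)) → Ω → ℕ,
          (∀ i, Measurable (Y i)) →
          iIndepFun Y Pr →
          (∀ i a, Pr {ω | Y i ω = a} =
            if a ∈ Finset.Icc (b m) m then ((m - b m + 1 : ℕ) : ENNReal)⁻¹ else 0) →
          1 - ENNReal.ofReal (2 * Real.exp (-(c₃ * m))) ≤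
            Pr {ω | c₁ * (m : ℝ) ^ 2 ≤ (∑ i, (Y i ω : ℝ)) ∧
                (∑ i, (Y i ω : ℝ)) ≤ c₂ * (m : ℝ) ^ 2} := by
  refine ⟨1/10, 8, 1/10, by norm_num, by norm_num, by norm_num, ?_⟩
  -- pick m₀
  have hsmall : ∀ᶠ m in Filter.atTop, (b m : ℝ) / m ≤ 1/100 := by
    have := hb0.eventually_le_const (by norm_num : (0:ℝ) < 1/100)
    exact this
  have hall : ∀ᶠ m in Filter.atTop,
      b m < m ∧ (b m : ℝ) / m ≤ 1/100 ∧ 20 ≤ m := by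
    filter_upwards [hb, hsmall, Filter.eventually_ge_atTop 20] with m h1 h2 h3
    exact ⟨h1, h2, h3⟩
  obtain ⟨m₀, hm₀⟩ := Filter.eventually_atTop.1 hall
  refine ⟨m₀, ?_⟩
  intro m hm Ω mΩ Pr hPr Y hYm hYindep hYdist
  obtain ⟨hbm, hb100', hm20⟩ := hm₀ m hm
  -- basic real facts
  have hmpos : (0:ℝ) < m := by
    have : (20:ℝ) ≤ m := by exact_mod_cast hm20
    linarith
  have hm20r : (20:ℝ) ≤ m := by exact_mod_cast hm20
  have hb100 : (b m : ℝ) ≤ m / 100 := by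
    rw [div_le_div_iff₀ hmpos (by norm_num)] at hb100'
    · linarith
  have hMcast : ((m - b m + 1 : ℕ) : ℝ) = (m : ℝ) - b m + 1 := by
    push_cast [Nat.le_of_lt hbm]
    ring
  have hMpos : (0:ℝ) < ((m - b m + 1 : ℕ) : ℝ) := by
    rw [hMcast]
    have hbnn : (0:ℝ) ≤ (b m : ℝ) := by positivity
    linarith
  have hzcast : ((4 * (m - b m + 1) : ℕ) : ℝ) = 4 * ((m:ℝ) - b m + 1) := by
    push_cast [Nat.le_of_lt hbm]; ring
  have hz3m : 3 * (m:ℝ) ≤ ((4 * (m - b m + 1) : ℕ) : ℝ) := by rw [hzcast]; linarith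
  set t : ℝ := 1 / m with ht
  have htpos : 0 < t := by positivity
  -- the sum
  set S : Ω → ℝ := fun ω => ∑ i, (Y i ω : ℝ) with hS
  have hScast : ∀ i : Fin (4 * (m - b m + 1)), Measurable (fun ω => ((Y i ω : ℝ))) :=
    fun i => measurable_from_top.comp (hYm i)
  have hSmeas : Measurable S := by
    apply Finset.measurable_sum
    intro i _
    exact hScast i
  -- negated variables
  set X : Fin (4 * (m - b m + 1)) → Ω → ℝ := fun i ω => -(Y i ω : ℝ) with hX
  have hXmeas : ∀ i, Measurable (X i) := fun i => (hScast i).neg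
  have hXindep : iIndepFun X Pr := by
    have := hYindep.comp (fun _ (a : ℕ) => -(a:ℝ)) (fun _ => measurable_from_top)
    exact this
  have hXnonpos : ∀ i ω, X i ω ≤ 0 := by
    intro i ω; simp [hX]
  -- integrability of exp(t * X i)
  have hint : ∀ i, Integrable (fun ω => Real.exp (t * X i ω)) Pr := by
    intro i
    refine Integrable.mono' (integrable_const (1:ℝ)) ?_ ?_
    · exact (((hXmeas i).const_mul t).exp).aestronglyMeasurable
    · filter_upwards with ω
      rw [Real.norm_of_nonneg (Real.exp_nonneg _)]
      rw [Real.exp_le_one_iff]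
      exact mul_nonpos_of_nonneg_of_nonpos htpos.le (hXnonpos i ω)
  -- per-variable mgf bound
  have hmgf : ∀ i, mgf (X i) Pr t ≤ 17/20 := by
    intro i
    have hmap : IsProbabilityMeasure (Pr.map (Y i)) :=
      Measure.isProbabilityMeasure_map (hYm i).aemeasurable
    have hfmeas : Measurable (fun a : ℕ => Real.exp (t * -(a:ℝ))) := measurable_from_top
    have hfint : Integrable (fun a : ℕ => Real.exp (t * -(a:ℝ))) (Pr.map (Y i)) := by
      refine Integrable.mono' (integrable_const (1:ℝ)) hfmeas.aestronglyMeasurable ?_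
      filter_upwards with a
      rw [Real.norm_of_nonneg (Real.exp_nonneg _), Real.exp_le_one_iff]
      have : (0:ℝ) ≤ (a:ℝ) := by positivity
      nlinarith
    have hmgf_eq : mgf (X i) Pr t = ∫ a, Real.exp (t * -(a:ℝ)) ∂(Pr.map (Y i)) := by
      rw [mgf, ← integral_map (hYm i).aemeasurable hfmeas.aestronglyMeasurable]
    have hsingle : ∀ a : ℕ, (Pr.map (Y i)) {a} =
        if a ∈ Finset.Icc (b m) m then ((m - b m + 1 : ℕ) : ENNReal)⁻¹ else 0 := by
      intro a
      rw [Measure.map_apply (hYm i) (measurableSet_singleton a)]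
      have : Y i ⁻¹' {a} = {ω | Y i ω = a} := rfl
      rw [this, hYdist i a]
    have hsum : mgf (X i) Pr t =
        ∑ a ∈ Finset.Icc (b m) m, ((m - b m + 1 : ℕ) : ℝ)⁻¹ * Real.exp (t * -(a:ℝ)) := by
      rw [hmgf_eq, integral_countable' hfint]
      rw [tsum_eq_sum (s := Finset.Icc (b m) m) ?_]
      · apply Finset.sum_congr rfl
        intro a ha
        rw [measureReal_def, hsingle a, if_pos ha, smul_eq_mul, ENNReal.toReal_inv, ENNReal.toReal_natCast]
      · intro a ha
        rw [measureReal_def, hsingle a, if_neg ha]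
        simp
    rw [hsum, ← Finset.mul_sum]
    -- bound the sum
    have hbound : ∑ a ∈ Finset.Icc (b m) m, Real.exp (t * -(a:ℝ)) ≤ (17/20) * ((m - b m + 1 : ℕ) : ℝ) := by
      have hterm : ∀ a ∈ Finset.Icc (b m) m,
          Real.exp (t * -(a:ℝ)) ≤ (if 2 * a < m then (1:ℝ) else 5/8) := by
        intro a _
        by_cases h2a : 2 * a < m
        · rw [if_pos h2a, Real.exp_le_one_iff]
          have : (0:ℝ) ≤ (a:ℝ) := by positivity
          nlinarith
        · rw [if_neg h2a]
          push_neg at h2a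
          have h2a' : (m:ℝ) ≤ 2 * a := by exact_mod_cast h2a
          calc Real.exp (t * -(a:ℝ)) ≤ Real.exp (-(1/2)) := by
                apply Real.exp_le_exp.2
                rw [ht]
                rw [div_mul_eq_mul_div, div_le_iff₀ hmpos]
                nlinarith
          _ ≤ 5/8 := aux_exp_half
      calc ∑ a ∈ Finset.Icc (b m) m, Real.exp (t * -(a:ℝ))
          ≤ ∑ a ∈ Finset.Icc (b m) m, (if 2 * a < m then (1:ℝ) else 5/8) :=
            Finset.sum_le_sum hterm
      _ ≤ (17/20) * ((m - b m + 1 : ℕ) : ℝ) := by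
        rw [Finset.sum_ite]
        simp only [Finset.sum_const, nsmul_eq_mul, mul_one]
        set s₁ := (Finset.Icc (b m) m).filter (fun a => 2 * a < m) with hs₁
        set s₂ := (Finset.Icc (b m) m).filter (fun a => ¬ 2 * a < m) with hs₂
        have hcards : s₁.card + s₂.card = m - b m + 1 := by
          rw [hs₁, hs₂, Finset.card_filter_add_card_filter_not]
          rw [Nat.card_Icc]
          omega
        have hcard1 : (s₁.card : ℝ) ≤ (m:ℝ)/2 + 1 := by
          have hsub : s₁ ⊆ Finset.Iic (m / 2) := by
            intro a ha
            rw [hs₁, Finset.mem_filter] at ha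
            rw [Finset.mem_Iic]
            omega
          have := Finset.card_le_card hsub
          rw [Nat.card_Iic] at this
          have h1 : (s₁.card : ℝ) ≤ ((m/2 : ℕ) : ℝ) + 1 := by exact_mod_cast this
          have h2 : ((m/2 : ℕ) : ℝ) ≤ (m:ℝ)/2 := Nat.cast_div_le
          linarith
        have hcard2 : (s₂.card : ℝ) = ((m - b m + 1 : ℕ) : ℝ) - s₁.card := by
          have : (s₁.card : ℝ) + s₂.card = ((m - b m + 1 : ℕ) : ℝ) := by exact_mod_cast hcards
          linarith
        rw [hcard2]
        have hN1 : (s₁.card : ℝ) ≤ (3/5) * ((m - b m + 1 : ℕ) : ℝ) := by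
          rw [hMcast]
          have : (0:ℝ) ≤ s₁.card := by positivity
          linarith
        linarith
    rw [inv_mul_le_iff₀ hMpos]
    calc ∑ a ∈ Finset.Icc (b m) m, Real.exp (t * -(a:ℝ)) ≤ (17/20) * ((m - b m + 1 : ℕ) : ℝ) := hbound
    _ = ((m - b m + 1 : ℕ) : ℝ) * (17/20) := by ring
  -- Chernoff
  have hXsum : (fun ω => ∑ i, X i ω) = ∑ i : Fin (4 * (m - b m + 1)), X i := by
    funext ω; simp
  have hnegS : (fun ω : Ω => -S ω) = ∑ i : Fin (4 * (m - b m + 1)), X i := by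
    funext ω
    simp [hS, hX, Finset.sum_apply, Finset.sum_neg_distrib]
  have hchern : (Pr {ω | -(1/10 * (m:ℝ)^2) ≤ -S ω}).toReal ≤
      Real.exp (-(m:ℝ)/10) := by
    have hintsum : Integrable (fun ω => Real.exp (t * (-S ω))) Pr := by
      refine Integrable.mono' (integrable_const (1:ℝ)) ?_ ?_
      · exact ((hSmeas.neg.const_mul t).exp).aestronglyMeasurable
      · filter_upwards with ω
        rw [Real.norm_of_nonneg (Real.exp_nonneg _), Real.exp_le_one_iff]
        have hS0 : 0 ≤ S ω := Finset.sum_nonneg (fun i _ => by positivity)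
        nlinarith
    have h1 := measure_ge_le_exp_mul_mgf (X := fun ω => -S ω) (μ := Pr)
        (-(1/10 * (m:ℝ)^2)) htpos.le hintsum
    have hmgfsum : mgf (fun ω => -S ω) Pr t ≤ (17/20 : ℝ) ^ (4 * (m - b m + 1)) := by
      rw [hnegS, hXindep.mgf_sum hXmeas]
      calc ∏ i : Fin (4 * (m - b m + 1)), mgf (X i) Pr t ≤ ∏ _i : Fin (4 * (m - b m + 1)), (17/20 : ℝ) :=
            Finset.prod_le_prod (fun i _ => mgf_nonneg) (fun i _ => hmgf i)
      _ = (17/20 : ℝ) ^ (4 * (m - b m + 1)) := by simp [div_pow]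
    have hpow : (17/20 : ℝ) ^ (4 * (m - b m + 1)) ≤ Real.exp (-((4 * (m - b m + 1) : ℕ):ℝ)/15) := by
      calc (17/20 : ℝ) ^ (4 * (m - b m + 1)) ≤ (Real.exp (-(1/15))) ^ (4 * (m - b m + 1)) :=
            pow_le_pow_left₀ (by norm_num) aux_ratio _
      _ = Real.exp (-((4 * (m - b m + 1) : ℕ):ℝ)/15) := by
          rw [← Real.exp_nat_mul]
          congr 1
          push_cast
          ring
    have hexp1 : Real.exp (-((4 * (m - b m + 1) : ℕ):ℝ)/15) ≤ Real.exp (-(m:ℝ)/5) := by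
      apply Real.exp_le_exp.2
      linarith
    have heq : -t * -(1/10 * (m:ℝ)^2) = (m:ℝ)/10 := by
      rw [ht]; field_simp
    calc (Pr {ω | -(1/10 * (m:ℝ)^2) ≤ -S ω}).toReal
        ≤ Real.exp (-t * -(1/10 * (m:ℝ)^2)) * mgf (fun ω => -S ω) Pr t := h1
      _ ≤ Real.exp ((m:ℝ)/10) * Real.exp (-(m:ℝ)/5) := by
          rw [heq]
          apply mul_le_mul_of_nonneg_left _ (Real.exp_nonneg _)
          exact le_trans hmgfsum (le_trans hpow hexp1)
      _ = Real.exp (-(m:ℝ)/10) := by rw [← Real.exp_add]; congr 1; ring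
  -- lower tail in ENNReal
  have hlow : Pr {ω | S ω ≤ 1/10 * (m:ℝ)^2} ≤ ENNReal.ofReal (Real.exp (-(m:ℝ)/10)) := by
    have hsetseq : {ω | S ω ≤ 1/10 * (m:ℝ)^2} = {ω | -(1/10 * (m:ℝ)^2) ≤ -S ω} := by
      ext ω; simp
    rw [hsetseq]
    rw [ENNReal.le_ofReal_iff_toReal_le (measure_ne_top _ _) (Real.exp_nonneg _)]
    exact hchern
  -- upper tail is null
  have hup : Pr {ω | 8 * (m:ℝ)^2 < S ω} = 0 := by
    have hBi : ∀ i : Fin (4 * (m - b m + 1)), Pr {ω | m < Y i ω} = 0 := by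
      intro i
      have hsub : {ω | m < Y i ω} ⊆ ⋃ a : ℕ, (if m < a then {ω | Y i ω = a} else ∅) := by
        intro ω hω
        have hω' : m < Y i ω := hω
        refine Set.mem_iUnion.2 ⟨Y i ω, ?_⟩
        rw [if_pos hω']
        exact rfl
      refine measure_mono_null hsub (measure_iUnion_null fun a => ?_)
      by_cases ha : m < a
      · rw [if_pos ha, hYdist i a, if_neg]
        simp only [Finset.mem_Icc]
        omega
      · rw [if_neg ha]; simp
    have hBall : Pr (⋃ i : Fin (4 * (m - b m + 1)), {ω | m < Y i ω}) = 0 :=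
      measure_iUnion_null fun i => hBi i
    refine measure_mono_null ?_ hBall
    intro ω hω
    simp only [Set.mem_setOf_eq] at hω
    by_contra hc
    simp only [Set.mem_iUnion, Set.mem_setOf_eq, not_exists, not_lt] at hc
    have hSle : S ω ≤ ((4 * (m - b m + 1) : ℕ):ℝ) * m := by
      rw [hS]
      calc ∑ i, (Y i ω : ℝ) ≤ ∑ _i : Fin (4 * (m - b m + 1)), (m:ℝ) := by
            apply Finset.sum_le_sum
            intro i _
            exact_mod_cast hc i
      _ = ((4 * (m - b m + 1) : ℕ):ℝ) * m := by simp [mul_comm]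
    have hzb : ((4 * (m - b m + 1) : ℕ):ℝ) * m ≤ 8 * (m:ℝ)^2 := by
      rw [hzcast]
      have hb0' : (0:ℝ) ≤ b m := by positivity
      nlinarith
    linarith
  -- assemble
  set A := {ω | 1/10 * (m:ℝ)^2 ≤ S ω ∧ S ω ≤ 8 * (m:ℝ)^2} with hA
  have hAmeas : MeasurableSet A := by
    apply MeasurableSet.inter
    · exact measurableSet_le measurable_const hSmeas
    · exact measurableSet_le hSmeas measurable_const
  have hAc : Pr Aᶜ ≤ ENNReal.ofReal (2 * Real.exp (-(1/10 * (m:ℝ)))) := by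
    have hsub : Aᶜ ⊆ {ω | S ω ≤ 1/10 * (m:ℝ)^2} ∪ {ω | 8 * (m:ℝ)^2 < S ω} := by
      intro ω hω
      simp only [hA, Set.mem_compl_iff, Set.mem_setOf_eq, not_and_or, not_le] at hω
      rcases hω with h | h
      · exact Or.inl (le_of_lt h)
      · exact Or.inr h
    calc Pr Aᶜ ≤ Pr ({ω | S ω ≤ 1/10 * (m:ℝ)^2} ∪ {ω | 8 * (m:ℝ)^2 < S ω}) :=
          measure_mono hsub
      _ ≤ Pr {ω | S ω ≤ 1/10 * (m:ℝ)^2} + Pr {ω | 8 * (m:ℝ)^2 < S ω} := measure_union_le _ _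
      _ ≤ ENNReal.ofReal (Real.exp (-(m:ℝ)/10)) + 0 := by
          exact add_le_add hlow (le_of_eq hup)
      _ ≤ ENNReal.ofReal (2 * Real.exp (-(1/10 * (m:ℝ)))) := by
          rw [add_zero]
          apply ENNReal.ofReal_le_ofReal
          have : -(m:ℝ)/10 = -(1/10 * (m:ℝ)) := by ring
          rw [this]
          nlinarith [Real.exp_nonneg (-(1/10 * (m:ℝ)))]
  calc 1 - ENNReal.ofReal (2 * Real.exp (-(1/10 * (m:ℝ))))
      ≤ 1 - Pr Aᶜ := tsub_le_tsub_left hAc 1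
    _ ≤ Pr A := by
        rw [tsub_le_iff_right]
        rw [measure_add_measure_compl hAmeas]
        exact le_of_eq measure_univ.symm
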